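/- arXiv:2206.13069 — 3 statements merged into one kernel-verified Lean document; each statement's English description precedes it below -/
import Mathlib

section
/- Let Y₁,…,Yₙ be independent real random variables with distribution functions F₁,…,Fₙ, let γ ∈ (0,1), and suppose gᵢ is a γ-quantile of Fᵢ for each i (i.e. Fᵢ(gᵢ-) ≤ γ ≤ Fᵢ(gᵢ)). Then there exist, on a common probability space, random variables with the same joint distribution as (Y₁,…,Yₙ) together with independent Bernoulli(γ) variables ξ₁,…,ξₙ such that simultaneously for all i: ξᵢ = 1 implies Yᵢ ≤ gᵢ, and ξᵢ = 0 implies Yᵢ ≥ gᵢ. -/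
open MeasureTheory Finset ProbabilityTheory

namespace CouplingAux

variable {n : ℕ} {α : Fin n → Type*} [mα : ∀ i, MeasurableSpace (α i)]

lemma pi_eval_preimage (μ : ∀ i, Measure (α i)) [∀ i, IsProbabilityMeasure (μ i)]
    (i : Fin n) (s : Set (α i)) :
    Measure.pi μ ((fun x : ∀ j, α j => x i) ⁻¹' s) = μ i s := by
  calc Measure.pi μ ((fun x : ∀ j, α j => x i) ⁻¹' s)
      = ∏ j, μ j (Function.update (fun _ => Set.univ) i s j) := by
        rw [← Set.univ_pi_update_univ, Measure.pi_pi]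
    _ = μ i s := by
        rw [Finset.prod_eq_single i (fun j _ hj => by simp [Function.update_of_ne hj])
          (by simp)]
        simp

lemma map_eval_pi (μ : ∀ i, Measure (α i)) [∀ i, IsProbabilityMeasure (μ i)] (i : Fin n) :
    Measure.map (fun x : ∀ j, α j => x i) (Measure.pi μ) = μ i := by
  ext s hs
  rw [Measure.map_apply (measurable_pi_apply i) hs, pi_eval_preimage]

lemma iIndepFun_eval (μ : ∀ i, Measure (α i)) [∀ i, IsProbabilityMeasure (μ i)] :
    iIndepFun (fun i (x : ∀ j, α j) => x i) (Measure.pi μ) := by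
  classical
  rw [iIndepFun_iff_measure_inter_preimage_eq_mul]
  intro S sets hsets
  have h1 : (⋂ i ∈ S, (fun x : ∀ j, α j => x i) ⁻¹' sets i)
      = Set.pi Set.univ (fun i => if i ∈ S then sets i else Set.univ) := by
    ext x
    simp only [Set.mem_iInter, Set.mem_preimage, Set.mem_pi, Set.mem_univ, true_implies]
    constructor
    · intro h i
      split_ifs with hi
      · exact h i hi
      · trivial
    · intro h i hi
      have := h i; rwa [if_pos hi] at this
  rw [h1, Measure.pi_pi]
  calc ∏ i, μ i (if i ∈ S then sets i else Set.univ)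
      = ∏ i ∈ S, μ i (if i ∈ S then sets i else Set.univ) :=
        (Finset.prod_subset (Finset.subset_univ S) (fun i _ hi => by simp [hi])).symm
    _ = ∏ i ∈ S, μ i (sets i) := Finset.prod_congr rfl fun i hi => by rw [if_pos hi]
    _ = ∏ i ∈ S, Measure.pi μ ((fun x : ∀ j, α j => x i) ⁻¹' sets i) :=
        Finset.prod_congr rfl fun i _ => (pi_eval_preimage μ i _).symm

lemma map_eq_pi {Ω : Type*} [MeasurableSpace Ω] (P : Measure Ω) [IsProbabilityMeasure P]
    (Y : ∀ i, Ω → α i) (hmeas : ∀ i, Measurable (Y i))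
    (hindep : iIndepFun Y P) :
    Measure.map (fun ω i => Y i ω) P = Measure.pi (fun i => P.map (Y i)) := by
  haveI : ∀ i, IsProbabilityMeasure (P.map (Y i)) :=
    fun i => Measure.isProbabilityMeasure_map (hmeas i).aemeasurable
  refine (Measure.pi_eq fun s hs => ?_).symm
  rw [Measure.map_apply (measurable_pi_lambda _ fun i => hmeas i) (MeasurableSet.univ_pi hs)]
  have h1 : (fun ω i => Y i ω) ⁻¹' Set.pi Set.univ s = ⋂ i ∈ Finset.univ, Y i ⁻¹' s i := by
    ext ω; simp [Set.mem_pi]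
  rw [h1, hindep.measure_inter_preimage_eq_mul Finset.univ (fun i _ => hs i)]
  exact Finset.prod_congr rfl fun i _ => (Measure.map_apply (hmeas i) (hs i)).symm

noncomputable def unif : Measure ℝ := volume.restrict (Set.Icc (0:ℝ) 1)

instance : IsProbabilityMeasure unif :=
  ⟨by rw [unif, Measure.restrict_apply_univ, Real.volume_Icc]; norm_num⟩

lemma unif_Iic {t : ℝ} (h0 : 0 ≤ t) (h1 : t ≤ 1) :
    unif (Set.Iic t) = ENNReal.ofReal t := by
  rw [unif, Measure.restrict_apply measurableSet_Iic]
  have h : Set.Iic t ∩ Set.Icc 0 1 = Set.Icc 0 t := by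
    ext y
    simp only [Set.mem_inter_iff, Set.mem_Iic, Set.mem_Icc]
    constructor
    · rintro ⟨hy, hy0, _⟩; exact ⟨hy0, hy⟩
    · rintro ⟨hy0, hy⟩; exact ⟨hy, hy0, le_trans hy h1⟩
  rw [h, Real.volume_Icc, sub_zero]

lemma exists_threshold (ν : Measure ℝ) [IsProbabilityMeasure ν] (γ gg : ℝ)
    (h1 : (ν (Set.Iio gg)).toReal ≤ γ) (h2 : γ ≤ (ν (Set.Iic gg)).toReal) :
    ∃ t : ℝ, 0 ≤ t ∧ t ≤ 1 ∧
      ((ν.prod unif) {p : ℝ × ℝ | p.1 < gg ∨ (p.1 = gg ∧ p.2 ≤ t)}).toReal = γ := by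
  set A : ℝ := (ν (Set.Iio gg)).toReal with hA
  set B : ℝ := (ν (Set.Iic gg)).toReal with hB
  have hABle : A ≤ B := by
    apply ENNReal.toReal_mono (measure_ne_top _ _)
    exact measure_mono Set.Iio_subset_Iic_self
  set t : ℝ := if B = A then 0 else (γ - A) / (B - A) with ht
  have hBA : ¬ B = A → A < B := fun h => lt_of_le_of_ne hABle (Ne.symm h)
  have ht0 : 0 ≤ t := by
    rw [ht]; split_ifs with h
    · exact le_refl 0
    · exact div_nonneg (by linarith) (by linarith [hBA h])
  have ht1 : t ≤ 1 := by
    rw [ht]; split_ifs with h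
    · norm_num
    · rw [div_le_one (by linarith [hBA h])]; linarith
  have hkey : A + (B - A) * t = γ := by
    rw [ht]; split_ifs with h
    · rw [h] at h2; linarith
    · have hlt := hBA h
      have hne : B - A ≠ 0 := ne_of_gt (by linarith)
      have hc : (B - A) * ((γ - A) / (B - A)) = γ - A := by field_simp
      linarith
  refine ⟨t, ht0, ht1, ?_⟩
  have hSeq : {p : ℝ × ℝ | p.1 < gg ∨ (p.1 = gg ∧ p.2 ≤ t)}
      = (Set.Iio gg ×ˢ Set.univ) ∪ ({gg} ×ˢ Set.Iic t) := by
    ext ⟨a, b⟩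
    simp only [Set.mem_setOf_eq, Set.mem_union, Set.mem_prod, Set.mem_Iio, Set.mem_univ,
      Set.mem_singleton_iff, Set.mem_Iic, and_true]
  have hdisj : Disjoint (Set.Iio gg ×ˢ (Set.univ : Set ℝ)) ({gg} ×ˢ Set.Iic t) := by
    rw [Set.disjoint_left]
    rintro ⟨a, b⟩ hp hq
    simp only [Set.mem_prod, Set.mem_Iio, Set.mem_singleton_iff] at hp hq
    exact absurd hq.1 (ne_of_lt hp.1)
  have hsing : ν (Set.Iic gg) = ν (Set.Iio gg) + ν {gg} := by
    rw [← Set.Iio_union_right,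
      measure_union (Set.disjoint_singleton_right.mpr (by simp)) (measurableSet_singleton _)]
  have hνg : (ν {gg}).toReal = B - A := by
    have h := congrArg ENNReal.toReal hsing
    rw [ENNReal.toReal_add (measure_ne_top _ _) (measure_ne_top _ _)] at h
    rw [hB, h, hA]; ring
  rw [hSeq, measure_union hdisj ((measurableSet_singleton _).prod measurableSet_Iic),
    Measure.prod_prod, Measure.prod_prod, measure_univ, mul_one, unif_Iic ht0 ht1,
    ENNReal.toReal_add (measure_ne_top _ _)
      (ENNReal.mul_ne_top (measure_ne_top _ _) ENNReal.ofReal_ne_top),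
    ENNReal.toReal_mul, ENNReal.toReal_ofReal ht0, hνg, ← hA]
  linarith

end CouplingAux

/-- **Coupling lemma (Lemma 1 of Dümbgen–Lüthi, singleton version).**
If `Y₁,…,Yₙ` are independent with distribution functions `Fᵢ` and `gᵢ` is a
`γ`-quantile of `Fᵢ` (that is, `P(Yᵢ < gᵢ) ≤ γ ≤ P(Yᵢ ≤ gᵢ)`), then on a common
probability space there are variables with the same joint distribution as
`(Y₁,…,Yₙ)` together with independent Bernoulli(γ) variables `ξ₁,…,ξₙ` such that
simultaneously for all `i`: `ξᵢ = 1 → Yᵢ ≤ gᵢ` and `ξᵢ = 0 → Yᵢ ≥ gᵢ`. -/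
theorem coupling_bernoulli_two_sided {n : ℕ}
    {Ω : Type} [MeasurableSpace Ω] (P : Measure Ω) [IsProbabilityMeasure P]
    (Y : Fin n → Ω → ℝ) (hY_meas : ∀ i, Measurable (Y i))
    (hY_indep : iIndepFun Y P)
    (γ : ℝ) (hγ : γ ∈ Set.Ioo (0:ℝ) 1) (g : Fin n → ℝ)
    (hg_left : ∀ i, (P {ω | Y i ω < g i}).toReal ≤ γ)
    (hg_right : ∀ i, γ ≤ (P {ω | Y i ω ≤ g i}).toReal) :
    ∃ (Ω' : Type) (_ : MeasurableSpace Ω') (P' : Measure Ω')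
      (_ : IsProbabilityMeasure P') (Y' : Fin n → Ω' → ℝ) (ξ : Fin n → Ω' → ℕ),
      (∀ i, Measurable (Y' i)) ∧ (∀ i, Measurable (ξ i)) ∧
      Measure.map (fun ω i => Y' i ω) P' = Measure.map (fun ω i => Y i ω) P ∧
      iIndepFun ξ P' ∧
      (∀ i ω, ξ i ω ≤ 1) ∧
      (∀ i, (P' {ω | ξ i ω = 1}).toReal = γ) ∧
      (∀ i ω, ξ i ω = 1 → Y' i ω ≤ g i) ∧
      (∀ i ω, ξ i ω = 0 → g i ≤ Y' i ω) := by
  classical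
  set ν : Fin n → Measure ℝ := fun i => P.map (Y i) with hν
  haveI : ∀ i, IsProbabilityMeasure (ν i) :=
    fun i => Measure.isProbabilityMeasure_map (hY_meas i).aemeasurable
  have hν_Iio : ∀ i, ν i (Set.Iio (g i)) = P {ω | Y i ω < g i} := fun i => by
    rw [hν, Measure.map_apply (hY_meas i) measurableSet_Iio]; rfl
  have hν_Iic : ∀ i, ν i (Set.Iic (g i)) = P {ω | Y i ω ≤ g i} := fun i => by
    rw [hν, Measure.map_apply (hY_meas i) measurableSet_Iic]; rfl
  have hthr : ∀ i, ∃ t : ℝ, 0 ≤ t ∧ t ≤ 1 ∧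
      (((ν i).prod CouplingAux.unif)
        {p : ℝ × ℝ | p.1 < g i ∨ (p.1 = g i ∧ p.2 ≤ t)}).toReal = γ :=
    fun i => CouplingAux.exists_threshold (ν i) γ (g i)
      (by rw [hν_Iio]; exact hg_left i) (by rw [hν_Iic]; exact hg_right i)
  choose t ht0 ht1 htγ using hthr
  set μ' : Fin n → Measure (ℝ × ℝ) := fun i => (ν i).prod CouplingAux.unif with hμ'
  haveI hPμ' : ∀ i, IsProbabilityMeasure (μ' i) := fun i => by rw [hμ']; infer_instance
  set S : Fin n → Set (ℝ × ℝ) :=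
    fun i => {p : ℝ × ℝ | p.1 < g i ∨ (p.1 = g i ∧ p.2 ≤ t i)} with hS
  have hSmeas : ∀ i, MeasurableSet (S i) := by
    intro i
    have h : S i = (Set.Iio (g i) ×ˢ Set.univ) ∪ ({g i} ×ˢ Set.Iic (t i)) := by
      ext ⟨a, b⟩
      simp only [hS, Set.mem_setOf_eq, Set.mem_union, Set.mem_prod, Set.mem_Iio, Set.mem_univ,
        Set.mem_singleton_iff, Set.mem_Iic, and_true]
    rw [h]
    exact (measurableSet_Iio.prod MeasurableSet.univ).union
      ((measurableSet_singleton _).prod measurableSet_Iic)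
  refine ⟨Fin n → ℝ × ℝ, inferInstance, Measure.pi μ', inferInstance,
    fun i x => (x i).1, fun i x => if x i ∈ S i then 1 else 0,
    fun i => measurable_fst.comp (measurable_pi_apply i),
    fun i => Measurable.ite ((hSmeas i).preimage (measurable_pi_apply i))
      measurable_const measurable_const, ?_, ?_, ?_, ?_, ?_, ?_⟩
  · -- equality of joint distributions
    have hind : iIndepFun
        (fun i (x : Fin n → ℝ × ℝ) => (x i).1) (Measure.pi μ') :=
      (CouplingAux.iIndepFun_eval μ').comp (fun _ => Prod.fst) (fun _ => measurable_fst)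
    have h2 : Measure.pi (fun i => (Measure.pi μ').map (fun x : Fin n → ℝ × ℝ => (x i).1))
        = Measure.pi ν := by
      congr 1
      funext i
      have h1 : (fun x : Fin n → ℝ × ℝ => (x i).1)
          = Prod.fst ∘ (fun x : Fin n → ℝ × ℝ => x i) := rfl
      rw [h1, ← Measure.map_map measurable_fst (measurable_pi_apply i),
        CouplingAux.map_eval_pi]
      show Measure.map Prod.fst (μ' i) = ν i
      rw [hμ', Measure.map_fst_prod, measure_univ, one_smul]
    exact (CouplingAux.map_eq_pi (Measure.pi μ') _
        (fun i => measurable_fst.comp (measurable_pi_apply i)) hind).trans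
      (h2.trans (CouplingAux.map_eq_pi P Y hY_meas hY_indep).symm)
  · -- independence of ξ
    exact (CouplingAux.iIndepFun_eval μ').comp
      (fun i p => if p ∈ S i then (1 : ℕ) else 0)
      (fun i => Measurable.ite (hSmeas i) measurable_const measurable_const)
  · -- ξ ≤ 1
    intro i x
    by_cases h : x i ∈ S i <;> simp [h]
  · -- Bernoulli(γ)
    intro i
    have h : {x : Fin n → ℝ × ℝ | (if x i ∈ S i then (1 : ℕ) else 0) = 1}
        = (fun x : Fin n → ℝ × ℝ => x i) ⁻¹' S i := by
      ext x; by_cases h : x i ∈ S i <;> simp [h]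
    rw [h, CouplingAux.pi_eval_preimage]
    exact htγ i
  · -- ξ = 1 → Y' ≤ g
    intro i x hx
    by_cases h : x i ∈ S i
    · rcases h with h | ⟨h, -⟩
      · exact le_of_lt h
      · exact le_of_eq h
    · simp [h] at hx
  · -- ξ = 0 → g ≤ Y'
    intro i x hx
    by_cases h : x i ∈ S i
    · simp [h] at hx
    · exact le_of_not_gt fun hlt => h (Or.inl hlt)
end

section
/- Define the confidence band L(x) := sup over B ∈ 𝓑 with max(B) ≤ x of y_{B:c_ℓ(N(B))}, and U(x) := inf over B ∈ 𝓑 with min(B) ≥ x of y_{B:N(B)+1−c_u(N(B))} (with sup ∅ = −∞, inf ∅ = +∞, y_{B:0} = −∞, y_{B:N(B)+1} = +∞). If g : ℝ → ℝ is nondecreasing and satisfies S_ℓ(B,g) ≥ c_ℓ(N(B)) and S_u(B,g) ≥ c_u(N(B)) for all B ∈ 𝓑, then L(x) ≤ g(x) ≤ U(x) for all x. -/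
open Finset

lemma getD_le_of_countP {l : List ℝ} (hs : l.Pairwise (· ≤ ·)) {j : ℕ} (hj : j < l.length) {c : ℝ}
    (hc : j + 1 ≤ l.countP (fun a => decide (a ≤ c))) : l.getD j 0 ≤ c := by
  by_contra h
  push_neg at h
  rw [List.getD_eq_getElem l 0 hj] at h
  have hmono : ∀ i j (hi : i < l.length) (hj : j < l.length), i ≤ j → l[i] ≤ l[j] := by
    intro i j hi hj hij
    rcases lt_or_eq_of_le hij with hlt | rfl
    · exact (List.pairwise_iff_getElem.mp hs) i j hi hj hlt
    · exact le_refl _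
  have h1 : (l.take j).countP (fun a => decide (a ≤ c)) ≤ j := by
    calc (l.take j).countP (fun a => decide (a ≤ c)) ≤ (l.take j).length := List.countP_le_length
    _ ≤ j := by simp
  have h2 : (l.drop j).countP (fun a => decide (a ≤ c)) = 0 := by
    rw [List.countP_eq_zero]
    intro a ha
    obtain ⟨i, hi, rfl⟩ := List.mem_iff_getElem.mp ha
    simp only [List.length_drop] at hi
    rw [List.getElem_drop]
    simp only [decide_eq_true_eq]
    intro hle
    have := hmono j (j + i) hj (by omega) (by omega)
    linarith
  have hsplit := congrArg (List.countP (fun a => decide (a ≤ c))) (List.take_append_drop j l).symm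
  rw [List.countP_append] at hsplit
  omega

lemma le_getD_of_countP {l : List ℝ} (hs : l.Pairwise (· ≤ ·)) {j : ℕ} (hj : j < l.length) {c : ℝ}
    (hc : l.length ≤ j + l.countP (fun a => decide (c ≤ a))) : c ≤ l.getD j 0 := by
  by_contra h
  push_neg at h
  rw [List.getD_eq_getElem l 0 hj] at h
  have hmono : ∀ i j (hi : i < l.length) (hj : j < l.length), i ≤ j → l[i] ≤ l[j] := by
    intro i j hi hj hij
    rcases lt_or_eq_of_le hij with hlt | rfl
    · exact (List.pairwise_iff_getElem.mp hs) i j hi hj hlt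
    · exact le_refl _
  have h1 : (l.drop (j+1)).countP (fun a => decide (c ≤ a)) ≤ l.length - (j+1) := by
    calc (l.drop (j+1)).countP (fun a => decide (c ≤ a)) ≤ (l.drop (j+1)).length :=
        List.countP_le_length
    _ = l.length - (j+1) := by simp
  have h2 : (l.take (j+1)).countP (fun a => decide (c ≤ a)) = 0 := by
    rw [List.countP_eq_zero]
    intro a ha
    obtain ⟨i, hi, rfl⟩ := List.mem_iff_getElem.mp ha
    have hi' : i < l.length := by
      simp only [List.length_take] at hi; omega
    have hi'' : i ≤ j := by simp only [List.length_take] at hi; omega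
    rw [List.getElem_take]
    simp only [decide_eq_true_eq]
    intro hle
    have := hmono i j hi' hj hi''
    linarith
  have hsplit := congrArg (List.countP (fun a => decide (c ≤ a))) (List.take_append_drop (j+1) l).symm
  rw [List.countP_append] at hsplit
  omega

/-- Extended-real order statistic: the `k`-th smallest of `{y i : i ∈ T}`, with the
conventions `y_{T:0} = -∞` and `y_{T:k} = +∞` for `k > #T`. -/
noncomputable def orderStatE {n : ℕ} (T : Finset (Fin n)) (y : Fin n → ℝ) (k : ℕ) : EReal :=
  if k = 0 then ⊥
  else if k ≤ T.card then ((Multiset.sort (T.val.map y) (· ≤ ·)).getD (k - 1) 0 : ℝ)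
  else ⊤

/-- **Validity of the confidence band.**
With data `(xᵢ, yᵢ)`, a family `𝓑` of compact intervals `[B.1, B.2]` with endpoints
among the `xᵢ`, counts `N(B)`, and critical values `cℓ(m), cu(m) ∈ {0,…,m}`, define
`L(t) = sup {y_{B:cℓ(N B)} : B ∈ 𝓑, max B ≤ t}` and
`U(t) = inf {y_{B:N(B)+1-cu(N B)} : B ∈ 𝓑, min B ≥ t}` (`sup ∅ = -∞`, `inf ∅ = ∞`).
If `g` is nondecreasing and satisfies `Sℓ(B,g) ≥ cℓ(N B)` and `Su(B,g) ≥ cu(N B)`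
for all `B ∈ 𝓑`, then `L ≤ g ≤ U` everywhere. -/
theorem confidence_band_contains_g {n : ℕ} (x y : Fin n → ℝ)
    (𝓑 : Finset (ℝ × ℝ))
    (h𝓑 : ∀ B ∈ 𝓑, B.1 ≤ B.2 ∧ (∃ i, B.1 = x i) ∧ ∃ i, B.2 = x i)
    (cℓ cu : ℕ → ℕ) (hcℓ : ∀ m, cℓ m ≤ m) (hcu : ∀ m, cu m ≤ m)
    (g : ℝ → ℝ) (hg : Monotone g)
    (hSℓ : ∀ B ∈ 𝓑, cℓ (univ.filter fun i => x i ∈ Set.Icc B.1 B.2).card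
      ≤ (univ.filter fun i => x i ∈ Set.Icc B.1 B.2 ∧ y i ≤ g (x i)).card)
    (hSu : ∀ B ∈ 𝓑, cu (univ.filter fun i => x i ∈ Set.Icc B.1 B.2).card
      ≤ (univ.filter fun i => x i ∈ Set.Icc B.1 B.2 ∧ g (x i) ≤ y i).card)
    (L U : ℝ → EReal)
    (hL : ∀ t, L t = sSup {v : EReal | ∃ B ∈ 𝓑, B.2 ≤ t ∧
      v = orderStatE (univ.filter fun i => x i ∈ Set.Icc B.1 B.2) y
            (cℓ (univ.filter fun i => x i ∈ Set.Icc B.1 B.2).card)})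
    (hU : ∀ t, U t = sInf {v : EReal | ∃ B ∈ 𝓑, t ≤ B.1 ∧
      v = orderStatE (univ.filter fun i => x i ∈ Set.Icc B.1 B.2) y
            ((univ.filter fun i => x i ∈ Set.Icc B.1 B.2).card + 1
              - cu (univ.filter fun i => x i ∈ Set.Icc B.1 B.2).card)}) :
    ∀ t : ℝ, L t ≤ (g t : EReal) ∧ (g t : EReal) ≤ U t := by
  intro t
  constructor
  · rw [hL]
    apply sSup_le
    rintro v ⟨B, hB, hBt, rfl⟩
    set T : Finset (Fin n) := univ.filter fun i => x i ∈ Set.Icc B.1 B.2 with hT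
    set k := cℓ T.card with hk
    by_cases hk0 : k = 0
    · simp [orderStatE, hk0]
    have hkN : k ≤ T.card := hcℓ _
    rw [orderStatE, if_neg hk0, if_pos hkN]
    set l := Multiset.sort (T.val.map y) (· ≤ ·) with hl
    have hlen : l.length = T.card := by
      rw [hl, Multiset.length_sort, Multiset.card_map]; rfl
    have hsorted : l.Pairwise (· ≤ ·) := Multiset.pairwise_sort _ _
    have hj : k - 1 < l.length := by omega
    rw [EReal.coe_le_coe_iff]
    apply getD_le_of_countP hsorted hj
    set T' : Finset (Fin n) := univ.filter fun i => x i ∈ Set.Icc B.1 B.2 ∧ y i ≤ g (x i)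
      with hT'
    have hsub : T' ⊆ T := by
      intro i hi
      simp only [hT', hT, mem_filter, mem_univ, true_and] at hi ⊢
      exact hi.1
    have hcount : T'.card ≤ l.countP (fun a => decide (a ≤ g t)) := by
      have h1 : (T'.val.map y) ≤ (T.val.map y) :=
        Multiset.map_le_map (Finset.val_le_iff.mpr hsub)
      have h2 : Multiset.countP (fun a => a ≤ g t) (T'.val.map y) = T'.card := by
        rw [Multiset.countP_eq_card.mpr]
        · rw [Multiset.card_map]; rfl
        · intro a ha
          obtain ⟨i, hi, rfl⟩ := Multiset.mem_map.mp ha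
          rw [Finset.mem_val] at hi
          simp only [hT', Finset.mem_filter, mem_univ, true_and] at hi
          exact hi.2.trans (hg (hi.1.2.trans hBt))
      have h3 : Multiset.countP (fun a => a ≤ g t) (T.val.map y)
          = l.countP (fun a => decide (a ≤ g t)) := by
        rw [hl]
        conv_lhs => rw [← Multiset.sort_eq (T.val.map y) (· ≤ ·)]
        exact Multiset.coe_countP _ _
      calc T'.card = Multiset.countP (fun a => a ≤ g t) (T'.val.map y) := h2.symm
      _ ≤ Multiset.countP (fun a => a ≤ g t) (T.val.map y) := Multiset.countP_le_of_le _ h1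
      _ = _ := h3
    have hS := hSℓ B hB
    rw [← hT, ← hk, ← hT'] at hS
    omega
  · rw [hU]
    apply le_sInf
    rintro v ⟨B, hB, hBt, rfl⟩
    set T : Finset (Fin n) := univ.filter fun i => x i ∈ Set.Icc B.1 B.2 with hT
    set c := cu T.card with hc
    have hcN : c ≤ T.card := hcu _
    set k := T.card + 1 - c with hk
    by_cases hc0 : c = 0
    · rw [orderStatE, if_neg (by omega), if_neg (by omega)]
      exact le_top
    have hk0 : k ≠ 0 := by omega
    have hkN : k ≤ T.card := by omega
    rw [orderStatE, if_neg hk0, if_pos hkN]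
    set l := Multiset.sort (T.val.map y) (· ≤ ·) with hl
    have hlen : l.length = T.card := by
      rw [hl, Multiset.length_sort, Multiset.card_map]; rfl
    have hsorted : l.Pairwise (· ≤ ·) := Multiset.pairwise_sort _ _
    have hj : k - 1 < l.length := by omega
    rw [EReal.coe_le_coe_iff]
    apply le_getD_of_countP hsorted hj
    set T' : Finset (Fin n) := univ.filter fun i => x i ∈ Set.Icc B.1 B.2 ∧ g (x i) ≤ y i
      with hT'
    have hsub : T' ⊆ T := by
      intro i hi
      simp only [hT', hT, mem_filter, mem_univ, true_and] at hi ⊢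
      exact hi.1
    have hcount : T'.card ≤ l.countP (fun a => decide (g t ≤ a)) := by
      have h1 : (T'.val.map y) ≤ (T.val.map y) :=
        Multiset.map_le_map (Finset.val_le_iff.mpr hsub)
      have h2 : Multiset.countP (fun a => g t ≤ a) (T'.val.map y) = T'.card := by
        rw [Multiset.countP_eq_card.mpr]
        · rw [Multiset.card_map]; rfl
        · intro a ha
          obtain ⟨i, hi, rfl⟩ := Multiset.mem_map.mp ha
          rw [Finset.mem_val] at hi
          simp only [hT', Finset.mem_filter, mem_univ, true_and] at hi
          exact (hg (hBt.trans hi.1.1)).trans hi.2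
      have h3 : Multiset.countP (fun a => g t ≤ a) (T.val.map y)
          = l.countP (fun a => decide (g t ≤ a)) := by
        rw [hl]
        conv_lhs => rw [← Multiset.sort_eq (T.val.map y) (· ≤ ·)]
        exact Multiset.coe_countP _ _
      calc T'.card = Multiset.countP (fun a => g t ≤ a) (T'.val.map y) := h2.symm
      _ ≤ Multiset.countP (fun a => g t ≤ a) (T.val.map y) := Multiset.countP_le_of_le _ h1
      _ = _ := h3
    have hS := hSu B hB
    rw [← hT, ← hc, ← hT'] at hS
    omega
end

section
/- (Coverage of the band.) Under the coupling of Lemma 1 and the calibration (1): if P(T_ℓ(B) ≥ c_ℓ(N(B)) and T_u(B) ≥ c_u(N(B)) for all B ∈ 𝓑) ≥ 1 − α, where T_ℓ(B) = Σ_{i: xᵢ ∈ B} ξᵢ, T_u(B) = N(B) − T_ℓ(B), and ξᵢ are i.i.d. Bernoulli(γ), then P(L(x) ≤ Q_γ(x) ≤ U(x) for all x) ≥ 1 − α, whenever Q_γ is a nondecreasing function such that Q_γ(xᵢ) is a γ-quantile of the distribution of Yᵢ for each i, and L, U are the band functions built from (xᵢ, Yᵢ). -/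
open MeasureTheory Finset ProbabilityTheory

lemma countP_sort_eq {n : ℕ} (T : Finset (Fin n)) (y : Fin n → ℝ) (p : ℝ → Prop)
    [DecidablePred p] :
    (Multiset.sort (T.val.map y) (· ≤ ·)).countP (fun a => decide (p a))
      = (T.filter fun i => p (y i)).card := by
  rw [← Multiset.coe_countP, Multiset.sort_eq, Multiset.countP_map]
  rfl

lemma sorted_getD_le_of_countP (s : List ℝ) (hs : s.Pairwise (· ≤ ·)) (c : ℝ) (k : ℕ)
    (hk1 : 1 ≤ k) (hkm : k ≤ s.length)
    (hcount : k ≤ s.countP (fun a => decide (a ≤ c))) :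
    s.getD (k-1) 0 ≤ c := by
  by_contra h
  push_neg at h
  have hlt : k - 1 < s.length := by omega
  rw [List.getD_eq_getElem s 0 hlt] at h
  have hdrop : ∀ a ∈ s.drop (k-1), ¬ (a ≤ c) := by
    intro a ha hac
    obtain ⟨j, hj, rfl⟩ := List.mem_iff_getElem.mp ha
    rw [List.getElem_drop] at hac
    have hjlt : k - 1 + j < s.length := by
      rw [List.length_drop] at hj; omega
    have hle : s[k-1] ≤ s[k-1+j] := by
      have := hs.rel_get_of_le (a := ⟨k-1, hlt⟩) (b := ⟨k-1+j, hjlt⟩)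
        (by simp [Fin.le_def])
      simpa using this
    linarith
  have h1 : s.countP (fun a => decide (a ≤ c))
      = (s.take (k-1)).countP (fun a => decide (a ≤ c))
        + (s.drop (k-1)).countP (fun a => decide (a ≤ c)) := by
    conv_lhs => rw [← List.take_append_drop (k-1) s]
    rw [List.countP_append]
  have h2 : (s.drop (k-1)).countP (fun a => decide (a ≤ c)) = 0 := by
    rw [List.countP_eq_zero]
    intro a ha
    simpa using hdrop a ha
  have h3 : (s.take (k-1)).countP (fun a => decide (a ≤ c)) ≤ k - 1 :=
    List.countP_le_length.trans (by simp)
  omega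

lemma le_sorted_getD_of_countP (s : List ℝ) (hs : s.Pairwise (· ≤ ·)) (c : ℝ) (k r : ℕ)
    (hk1 : 1 ≤ k) (hkm : k ≤ s.length) (hkr : k + r = s.length + 1)
    (hcount : r ≤ s.countP (fun a => decide (c ≤ a))) :
    c ≤ s.getD (k-1) 0 := by
  by_contra h
  push_neg at h
  have hlt : k - 1 < s.length := by omega
  rw [List.getD_eq_getElem s 0 hlt] at h
  have htake : ∀ a ∈ s.take k, ¬ (c ≤ a) := by
    intro a ha hac
    obtain ⟨j, hj, rfl⟩ := List.mem_iff_getElem.mp ha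
    rw [List.getElem_take] at hac
    have hjlt : j < s.length := by
      have := hj; simp [List.length_take] at this; omega
    have hle : s[j] ≤ s[k-1] := by
      have hjk : j ≤ k - 1 := by
        have := hj; simp [List.length_take] at this; omega
      have := hs.rel_get_of_le (a := ⟨j, hjlt⟩) (b := ⟨k-1, hlt⟩)
        (by simp [Fin.le_def]; omega)
      simpa using this
    linarith
  have h1 : s.countP (fun a => decide (c ≤ a))
      = (s.take k).countP (fun a => decide (c ≤ a))
        + (s.drop k).countP (fun a => decide (c ≤ a)) := by
    conv_lhs => rw [← List.take_append_drop k s]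
    rw [List.countP_append]
  have h2 : (s.take k).countP (fun a => decide (c ≤ a)) = 0 := by
    rw [List.countP_eq_zero]
    intro a ha
    simpa using htake a ha
  have h3 : (s.drop k).countP (fun a => decide (c ≤ a)) ≤ s.length - k :=
    List.countP_le_length.trans (by simp)
  omega

lemma orderStatE_le {n : ℕ} (T : Finset (Fin n)) (y : Fin n → ℝ) (k : ℕ) (c : ℝ)
    (hk : k ≤ T.card)
    (hcount : k ≤ (T.filter fun i => y i ≤ c).card) :
    orderStatE T y k ≤ (c : EReal) := by
  unfold orderStatE
  rcases Nat.eq_zero_or_pos k with rfl | hk1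
  · simp
  · rw [if_neg (by omega), if_pos hk]
    rw [EReal.coe_le_coe_iff]
    have hlen : (Multiset.sort (T.val.map y) (· ≤ ·)).length = T.card := by
      rw [Multiset.length_sort, Multiset.card_map]; rfl
    refine sorted_getD_le_of_countP _ (Multiset.pairwise_sort _ _) c k hk1 (by omega) ?_
    rw [countP_sort_eq T y (fun a => a ≤ c)]
    exact hcount

lemma le_orderStatE {n : ℕ} (T : Finset (Fin n)) (y : Fin n → ℝ) (r : ℕ) (c : ℝ)
    (hr : r ≤ T.card)
    (hcount : r ≤ (T.filter fun i => c ≤ y i).card) :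
    (c : EReal) ≤ orderStatE T y (T.card + 1 - r) := by
  unfold orderStatE
  rcases Nat.eq_zero_or_pos r with rfl | hr1
  · rw [if_neg (by omega), if_neg (by omega)]; exact le_top
  · rw [if_neg (by omega), if_pos (by omega)]
    rw [EReal.coe_le_coe_iff]
    have hlen : (Multiset.sort (T.val.map y) (· ≤ ·)).length = T.card := by
      rw [Multiset.length_sort, Multiset.card_map]; rfl
    refine le_sorted_getD_of_countP _ (Multiset.pairwise_sort _ _) c (T.card + 1 - r) r
      (by omega) (by omega) (by omega) ?_
    rw [countP_sort_eq T y (fun a => c ≤ a)]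
    exact hcount

/-- **Coverage of the confidence band.**
Given fixed covariates `xᵢ`, responses `Yᵢ` whose `γ`-quantile at `xᵢ` is `Q(xᵢ)`
for a nondecreasing `Q`, and a coupling with Bernoulli(γ) variables `ξᵢ` as in
Lemma 1 (`ξᵢ = 1 → Yᵢ ≤ Q(xᵢ)`, `ξᵢ = 0 → Yᵢ ≥ Q(xᵢ)`): if the calibration
`P(∀ B ∈ 𝓑, Tℓ(B) ≥ cℓ(N B) ∧ Tu(B) ≥ cu(N B)) ≥ 1 - α` holds, where
`Tℓ(B) = Σ_{i : xᵢ ∈ B} ξᵢ` and `Tu(B) = N(B) - Tℓ(B)`, then the band `(L, U)`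
built from `(xᵢ, Yᵢ)` satisfies `P(∀ t, L(t) ≤ Q(t) ≤ U(t)) ≥ 1 - α`. -/
theorem band_coverage {n : ℕ}
    {Ω : Type*} [MeasurableSpace Ω] (P : Measure Ω) [IsProbabilityMeasure P]
    (γ α : ℝ) (hγ : γ ∈ Set.Ioo (0:ℝ) 1) (hα : α ∈ Set.Ioo (0:ℝ) 1)
    (x : Fin n → ℝ) (Y : Fin n → Ω → ℝ)
    (Q : ℝ → ℝ) (hQ : Monotone Q)
    (hQ_quantile : ∀ i, (P {ω | Y i ω < Q (x i)}).toReal ≤ γ ∧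
      γ ≤ (P {ω | Y i ω ≤ Q (x i)}).toReal)
    (ξ : Fin n → Ω → ℕ) (hξ01 : ∀ i ω, ξ i ω ≤ 1)
    (h_coupling₁ : ∀ i ω, ξ i ω = 1 → Y i ω ≤ Q (x i))
    (h_coupling₀ : ∀ i ω, ξ i ω = 0 → Q (x i) ≤ Y i ω)
    (𝓑 : Finset (ℝ × ℝ)) (h𝓑 : ∀ B ∈ 𝓑, B.1 ≤ B.2)
    (cℓ cu : ℕ → ℕ) (hcℓ : ∀ m, cℓ m ≤ m) (hcu : ∀ m, cu m ≤ m)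
    (h_calib : ENNReal.ofReal (1 - α) ≤
      P {ω | ∀ B ∈ 𝓑,
        cℓ (univ.filter fun i => x i ∈ Set.Icc B.1 B.2).card
            ≤ ∑ i ∈ univ.filter fun i => x i ∈ Set.Icc B.1 B.2, ξ i ω ∧
        cu (univ.filter fun i => x i ∈ Set.Icc B.1 B.2).card
            ≤ (univ.filter fun i => x i ∈ Set.Icc B.1 B.2).card
              - ∑ i ∈ univ.filter fun i => x i ∈ Set.Icc B.1 B.2, ξ i ω})
    (L U : Ω → ℝ → EReal)
    (hL : ∀ ω t, L ω t = sSup {v : EReal | ∃ B ∈ 𝓑, B.2 ≤ t ∧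
      v = orderStatE (univ.filter fun i => x i ∈ Set.Icc B.1 B.2) (fun i => Y i ω)
            (cℓ (univ.filter fun i => x i ∈ Set.Icc B.1 B.2).card)})
    (hU : ∀ ω t, U ω t = sInf {v : EReal | ∃ B ∈ 𝓑, t ≤ B.1 ∧
      v = orderStatE (univ.filter fun i => x i ∈ Set.Icc B.1 B.2) (fun i => Y i ω)
            ((univ.filter fun i => x i ∈ Set.Icc B.1 B.2).card + 1
              - cu (univ.filter fun i => x i ∈ Set.Icc B.1 B.2).card)}) :
    ENNReal.ofReal (1 - α) ≤
      P {ω | ∀ t : ℝ, L ω t ≤ (Q t : EReal) ∧ (Q t : EReal) ≤ U ω t} := by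
  refine le_trans h_calib (measure_mono ?_)
  intro ω hω
  simp only [Set.mem_setOf_eq] at hω ⊢
  intro t
  constructor
  · rw [hL]
    apply sSup_le
    rintro v ⟨B, hB, hBt, rfl⟩
    obtain ⟨h1, h2⟩ := hω B hB
    set T := univ.filter fun i => x i ∈ Set.Icc B.1 B.2 with hT
    apply orderStatE_le _ _ _ _ (hcℓ _)
    refine le_trans h1 ?_
    have hsum : ∑ i ∈ T, ξ i ω = (T.filter fun i => ξ i ω = 1).card := by
      rw [Finset.card_filter]
      refine Finset.sum_congr rfl fun i _ => ?_
      have := hξ01 i ω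
      interval_cases h : ξ i ω <;> simp
    rw [hsum]
    apply Finset.card_le_card
    intro i hi
    rw [Finset.mem_filter] at hi ⊢
    obtain ⟨hiT, hi1⟩ := hi
    refine ⟨hiT, ?_⟩
    have hx : x i ≤ B.2 := by
      have := Finset.mem_filter.mp hiT
      exact this.2.2
    calc Y i ω ≤ Q (x i) := h_coupling₁ i ω hi1
      _ ≤ Q t := hQ (le_trans hx hBt)
  · rw [hU]
    apply le_sInf
    rintro v ⟨B, hB, htB, rfl⟩
    obtain ⟨h1, h2⟩ := hω B hB
    set T := univ.filter fun i => x i ∈ Set.Icc B.1 B.2 with hT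
    apply le_orderStatE _ _ _ _ (hcu _)
    have hsum : ∑ i ∈ T, ξ i ω = (T.filter fun i => ξ i ω = 1).card := by
      rw [Finset.card_filter]
      refine Finset.sum_congr rfl fun i _ => ?_
      have := hξ01 i ω
      interval_cases h : ξ i ω <;> simp
    have hpart : (T.filter fun i => ξ i ω = 1).card
        + (T.filter fun i => ¬ (ξ i ω = 1)).card = T.card :=
      Finset.card_filter_add_card_filter_not _
    have hsub : (T.filter fun i => ¬ (ξ i ω = 1)).card
        ≤ (T.filter fun i => Q t ≤ Y i ω).card := by
      apply Finset.card_le_card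
      intro i hi
      rw [Finset.mem_filter] at hi ⊢
      obtain ⟨hiT, hi1⟩ := hi
      refine ⟨hiT, ?_⟩
      have hi0 : ξ i ω = 0 := by have := hξ01 i ω; omega
      have hx : B.1 ≤ x i := by
        have := Finset.mem_filter.mp hiT
        exact this.2.1
      calc Q t ≤ Q (x i) := hQ (le_trans htB hx)
        _ ≤ Y i ω := h_coupling₀ i ω hi0
    have hle : (T.filter fun i => ξ i ω = 1).card ≤ T.card := by
      apply Finset.card_le_card; exact Finset.filter_subset _ _
    omega
end
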